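/- Let R be a Noetherian ℕ-graded ring with R₀ a field and irrelevant ideal m, and let M be a finitely generated ℤ-graded R-module such that the localization M_m is free over R_m. If Spec R \ {m} is connected (e.g. Proj R is connected) then M is a free graded R-module, i.e. isomorphic to a finite direct sum of shifts R(d_i). -/

import Mathlib

open DirectSum

section Aux

variable {k : Type*} [Field k] {R : Type*} [CommRing R] [Algebra k R]
  (𝒜 : ℕ → Submodule k R) [GradedAlgebra 𝒜]
  {M : Type*} [AddCommGroup M] [Module k M] [Module R M] [IsScalarTower k R M]
  (ℳ : ℤ → Submodule k M) [DirectSum.Decomposition ℳ]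

/-- degree-`t` component of `r • x` for `x` homogeneous of degree `e`. -/
lemma aux_decompose_smul_homog
    (hsmul : ∀ (i : ℕ) (j : ℤ) (r : R) (x : M), r ∈ 𝒜 i → x ∈ ℳ j → r • x ∈ ℳ (i + j))
    {x : M} {e : ℤ} (hx : x ∈ ℳ e) (r : R) (t : ℤ) :
    (DirectSum.decompose ℳ (r • x) t : M) =
      (if 0 ≤ t - e then ((DirectSum.decompose 𝒜 r ((t - e).toNat) : R)) else 0) • x := by
  classical
  have key : ∀ n : ℕ, (DirectSum.decompose ℳ ((DirectSum.decompose 𝒜 r n : R) • x) t : M)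
      = if (n : ℤ) + e = t then (DirectSum.decompose 𝒜 r n : R) • x else 0 := by
    intro n
    have hmem := hsmul n e ((DirectSum.decompose 𝒜 r n : R)) x (SetLike.coe_mem _) hx
    split_ifs with h
    · rw [h] at hmem; exact DirectSum.decompose_of_mem_same ℳ hmem
    · exact DirectSum.decompose_of_mem_ne ℳ hmem h
  have expand : (DirectSum.decompose ℳ (r • x) t : M)
      = ∑ n ∈ (DirectSum.decompose 𝒜 r).support,
          (DirectSum.decompose ℳ ((DirectSum.decompose 𝒜 r n : R) • x) t : M) := by
    conv_lhs => rw [← DirectSum.sum_support_decompose 𝒜 r, Finset.sum_smul]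
    rw [DirectSum.decompose_sum]
    rw [DFinsupp.finset_sum_apply]
    push_cast
    rfl
  rw [expand]
  simp_rw [key]
  split_ifs with h
  · set n₀ := (t - e).toNat with hn₀
    have hcast : (n₀ : ℤ) = t - e := Int.toNat_of_nonneg h
    rw [Finset.sum_eq_single n₀]
    · rw [if_pos (by omega)]
    · intro b _ hb
      rw [if_neg (by omega)]
    · intro hb
      rw [DFinsupp.notMem_support_iff.mp hb]
      simp
  · rw [zero_smul]
    apply Finset.sum_eq_zero
    intro b _
    rw [if_neg (by omega)]

end Aux

section Aux2
set_option linter.unusedSectionVars false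

variable {k : Type*} [Field k] {R : Type*} [CommRing R] [Algebra k R]
  (𝒜 : ℕ → Submodule k R) [GradedAlgebra 𝒜]
  {M : Type*} [AddCommGroup M] [Module k M] [Module R M] [IsScalarTower k R M]
  (ℳ : ℤ → Submodule k M) [DirectSum.Decomposition ℳ]

lemma aux_decompose_comb
    (hsmul : ∀ (i : ℕ) (j : ℤ) (r : R) (x : M), r ∈ 𝒜 i → x ∈ ℳ j → r • x ∈ ℳ (i + j))
    {n : ℕ} (x : Fin n → M) (e : Fin n → ℤ) (hx : ∀ i, x i ∈ ℳ (e i))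
    (c : Fin n → R) (t : ℤ) :
    (DirectSum.decompose ℳ (∑ i, c i • x i) t : M)
      = ∑ i, (if 0 ≤ t - e i then ((DirectSum.decompose 𝒜 (c i) ((t - e i).toNat) : R)) else 0)
          • x i := by
  classical
  rw [DirectSum.decompose_sum, DFinsupp.finset_sum_apply]
  push_cast
  rw [Finset.sum_congr rfl (fun i _ => aux_decompose_smul_homog 𝒜 ℳ hsmul (hx i) (c i) t)]

/-- if `v` is outside the irrelevant ideal and kills a homogeneous element, that element is 0. -/
lemma aux_homog_kill (h0 : 𝒜 0 ≤ (1 : Submodule k R))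
    {v h : R} {n : ℕ} (hv : v ∉ (HomogeneousIdeal.irrelevant 𝒜).toIdeal)
    (hh : h ∈ 𝒜 n) (hvh : v * h = 0) : h = 0 := by
  have hdec : (DirectSum.decompose 𝒜 (v * h) ((0 : ℕ) + n) : R)
      = (DirectSum.decompose 𝒜 v 0 : R) * h :=
    DirectSum.coe_decompose_mul_add_of_right_mem 𝒜 hh
  rw [hvh] at hdec
  simp only [DirectSum.decompose_zero, DirectSum.zero_apply, ZeroMemClass.coe_zero] at hdec
  have hu : (DirectSum.decompose 𝒜 v 0 : R) ≠ 0 := by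
    intro hzero
    exact hv (by simpa [HomogeneousIdeal.mem_irrelevant_iff, GradedRing.proj_apply] using hzero)
  obtain ⟨a, ha⟩ := Submodule.mem_one.mp (h0 (SetLike.coe_mem (DirectSum.decompose 𝒜 v 0)))
  have ha0 : a ≠ 0 := by
    rintro rfl; rw [map_zero] at ha; exact hu ha.symm
  have : a • h = 0 := by
    rw [← algebraMap_smul R a h, Algebra.smul_def, ha]
    exact hdec.symm
  calc h = a⁻¹ • (a • h) := by rw [smul_smul, inv_mul_cancel₀ ha0, one_smul]
  _ = 0 := by rw [this, smul_zero]

end Aux2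

set_option maxHeartbeats 1000000 in
lemma aux_loc_kill
    {R : Type*} [CommRing R] [IsNoetherianRing R]
    (m : Ideal R) (hm : m.IsPrime)
    {r : ℕ} {M : Type*} [AddCommGroup M] [Module R M]
    (φ : (Fin r → R) →ₗ[R] M) (hsurj : Function.Surjective φ)
    (hker : ∀ c, φ c = 0 → ∀ i, c i ∈ m)
    (hfree : Module.Free (Localization.AtPrime m) (LocalizedModule m.primeCompl M)) :
    ∀ c : Fin r → R, φ c = 0 → ∃ v : m.primeCompl, (v : R) • c = 0 := by
  classical
  haveI := hm
  haveI := hfree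
  set S := m.primeCompl with hS
  let Rm := Localization.AtPrime m
  let f := LocalizedModule.mkLinearMap S (Fin r → R)
  let g := LocalizedModule.mkLinearMap S M
  let φm := (IsLocalizedModule.map S f g φ).extendScalarsOfIsLocalization S Rm
  haveI : IsNoetherianRing Rm := IsLocalization.isNoetherianRing S Rm inferInstance
  haveI : Module.Finite Rm (LocalizedModule S (Fin r → R)) :=
    Module.Finite.of_isLocalizedModule S f
  have hcoe : ∀ x, φm x = (IsLocalizedModule.map S f g φ) x := fun _ => rfl
  have hφm_surj : Function.Surjective φm := by
    have h1 := IsLocalizedModule.map_surjective S f g φ hsurj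
    intro y; obtain ⟨z, hz⟩ := h1 y; exact ⟨z, by rw [hcoe]; exact hz⟩
  obtain ⟨σ, hσ⟩ := Module.projective_lifting_property φm LinearMap.id hφm_surj
  set N := LinearMap.ker φm with hN
  set I := IsLocalRing.maximalIdeal Rm with hI
  have hNtop : N ≤ I • (⊤ : Submodule Rm (LocalizedModule S (Fin r → R))) := by
    intro z hz
    have hz' : z ∈ (LinearMap.ker φ).localized' Rm S f := by
      rw [LinearMap.localized'_ker_eq_ker_localizedMap Rm S f g φ]; exact hz
    obtain ⟨c, hc, s, rfl⟩ := hz'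
    have hcm : ∀ i, c i ∈ m := hker c (LinearMap.mem_ker.mp hc)
    let L : (Fin r → R) →ₗ[R] LocalizedModule S (Fin r → R) :=
      { toFun := fun y => IsLocalizedModule.mk' f y s,
        map_add' := fun a b => IsLocalizedModule.mk'_add f a b s,
        map_smul' := fun t a => by
          rw [RingHom.id_apply]; exact IsLocalizedModule.mk'_smul f t a s }
    have hrepr : IsLocalizedModule.mk' f c s = ∑ i, L (Pi.single i (c i)) := by
      rw [← map_sum, Finset.univ_sum_single]
      rfl
    rw [hrepr]
    apply Submodule.sum_mem
    intro i _
    have h2 : L (Pi.single i (c i)) = algebraMap R Rm (c i) • L (Pi.single i 1) := by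
      rw [algebraMap_smul, ← map_smul]
      congr 1
      rw [← Pi.single_smul, smul_eq_mul, mul_one]
    rw [h2]
    exact Submodule.smul_mem_smul
      ((IsLocalization.AtPrime.to_map_mem_maximal_iff Rm m (c i)).mpr (hcm i)) trivial
  let π := LinearMap.id - σ ∘ₗ φm
  have hπmem : ∀ y, π y ∈ N := by
    intro y
    rw [hN, LinearMap.mem_ker]
    have h3 : φm (σ (φm y)) = φm y := by
      have := congrArg (fun ψ => ψ (φm y)) hσ
      simpa using this
    simp [π, h3]
  have hπfix : ∀ z ∈ N, π z = z := by
    intro z hz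
    rw [hN, LinearMap.mem_ker] at hz
    simp [π, hz]
  have hNle : N ≤ I • N := by
    intro z hz
    have h1 : z ∈ Submodule.map π (I • ⊤) := ⟨z, hNtop hz, hπfix z hz⟩
    rw [Submodule.map_smul''] at h1
    refine Submodule.smul_mono le_rfl ?_ h1
    rw [Submodule.map_top]
    rintro _ ⟨y, rfl⟩
    exact hπmem y
  have hNfg : N.FG := IsNoetherian.noetherian N
  have hNbot : N = ⊥ :=
    Submodule.eq_bot_of_le_smul_of_le_jacobson_bot I N hNfg hNle
      (by rw [IsLocalRing.jacobson_eq_maximalIdeal ⊥ bot_ne_top])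
  intro c hc
  have hfc : f c ∈ N := by
    rw [hN, LinearMap.mem_ker, hcoe, IsLocalizedModule.map_apply]
    rw [hc, map_zero]
  rw [hNbot, Submodule.mem_bot] at hfc
  obtain ⟨v, hv⟩ := (IsLocalizedModule.eq_zero_iff S f).mp hfc
  exact ⟨v, hv⟩

set_option maxHeartbeats 1000000 in
/-- Let `R` be a Noetherian ℕ-graded ring with `R₀ = k` a field and irrelevant maximal ideal
`m`, and let `M` be a finitely generated ℤ-graded `R`-module whose localization at `m` is free.
If the punctured spectrum `Spec R \ {m}` is connected, then `M` is free as a graded module: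
`M ≅ ⊕ᵢ R(dᵢ)`, i.e. there is an `R`-linear isomorphism `M ≃ Rʳ` carrying the degree-`j`
part of `M` into the degree-`j + dᵢ` parts of the shifted copies of `R`. -/
theorem graded_free_of_locally_free_at_irrelevant
    (k : Type*) [Field k] (R : Type*) [CommRing R] [Algebra k R] [IsNoetherianRing R]
    (𝒜 : ℕ → Submodule k R) [GradedAlgebra 𝒜]
    (h0 : 𝒜 0 ≤ (1 : Submodule k R))
    (M : Type*) [AddCommGroup M] [Module k M] [Module R M] [IsScalarTower k R M]
    [Module.Finite R M]
    (ℳ : ℤ → Submodule k M) [DirectSum.Decomposition ℳ]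
    (hsmul : ∀ (i : ℕ) (j : ℤ) (r : R) (x : M), r ∈ 𝒜 i → x ∈ ℳ j → r • x ∈ ℳ (i + j))
    (hm : ((HomogeneousIdeal.irrelevant 𝒜).toIdeal).IsPrime) :
    haveI := hm
    ∀ (_hfree : Module.Free (Localization.AtPrime (HomogeneousIdeal.irrelevant 𝒜).toIdeal)
        (LocalizedModule ((HomogeneousIdeal.irrelevant 𝒜).toIdeal).primeCompl M))
      (_hconn : IsConnected
        {p : PrimeSpectrum R | p.asIdeal ≠ (HomogeneousIdeal.irrelevant 𝒜).toIdeal}),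
    ∃ (r : ℕ) (d : Fin r → ℤ) (e : M ≃ₗ[R] (Fin r → R)),
      ∀ (j : ℤ) (x : M), x ∈ ℳ j → ∀ i : Fin r,
        if h : 0 ≤ j + d i then (e x) i ∈ 𝒜 ((j + d i).toNat) else (e x) i = 0 := by
  classical
  intro hfree _hconn
  set m := (HomogeneousIdeal.irrelevant 𝒜).toIdeal with hmdef
  -- a finite homogeneous spanning set
  obtain ⟨s, hs⟩ : (⊤ : Submodule R M).FG := Module.Finite.fg_top
  let t : Finset M := s.biUnion fun g =>
    (DirectSum.decompose ℳ g).support.image fun j => ((DirectSum.decompose ℳ g) j : M)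
  have ht_homog : ∀ y ∈ t, ∃ j, y ∈ ℳ j := by
    intro y hy
    simp only [t, Finset.mem_biUnion, Finset.mem_image] at hy
    obtain ⟨g, -, j, -, rfl⟩ := hy
    exact ⟨j, SetLike.coe_mem _⟩
  have ht_span : Submodule.span R (↑t : Set M) = ⊤ := by
    rw [eq_top_iff, ← hs, Submodule.span_le]
    intro g hg
    have hgsum : g = ∑ j ∈ (DirectSum.decompose ℳ g).support, ((DirectSum.decompose ℳ g) j : M) :=
      (DirectSum.sum_support_decompose ℳ g).symm
    rw [SetLike.mem_coe, hgsum]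
    apply Submodule.sum_mem
    intro j hj
    apply Submodule.subset_span
    exact Finset.mem_coe.mpr (Finset.mem_biUnion.mpr
      ⟨g, Finset.mem_coe.mp hg, Finset.mem_image.mpr ⟨j, hj, rfl⟩⟩)
  have hgen : ∃ n : ℕ, ∃ e : Fin n → ℤ, ∃ x : Fin n → M,
      (∀ i, x i ∈ ℳ (e i)) ∧ Submodule.span R (Set.range x) = ⊤ := by
    refine ⟨t.card, fun i => Classical.choose (ht_homog _ (t.equivFin.symm i).2),
      fun i => ((t.equivFin.symm i : t) : M),
      fun i => Classical.choose_spec (ht_homog _ (t.equivFin.symm i).2), ?_⟩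
    have hre : Set.range (fun i => ((t.equivFin.symm i : t) : M)) = (↑t : Set M) := by
      ext y; constructor
      · rintro ⟨i, rfl⟩; exact (t.equivFin.symm i).2
      · intro hy; exact ⟨t.equivFin ⟨y, hy⟩, by simp⟩
    rw [hre, ht_span]
  set r := Nat.find hgen with hrdef
  obtain ⟨e, x, hx, hspan⟩ : ∃ e : Fin r → ℤ, ∃ x : Fin r → M,
      (∀ i, x i ∈ ℳ (e i)) ∧ Submodule.span R (Set.range x) = ⊤ := Nat.find_spec hgen
  let φ : (Fin r → R) →ₗ[R] M := Fintype.linearCombination R x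
  have hφ_apply : ∀ c, φ c = ∑ i, c i • x i := fun c => rfl
  have hφ_surj : Function.Surjective φ := by
    rw [← LinearMap.range_eq_top, Fintype.range_linearCombination, hspan]
  -- coefficients of relations lie in m
  have hker : ∀ c, φ c = 0 → ∀ i, c i ∈ m := by
    intro c hc
    by_contra hcon
    push_neg at hcon
    obtain ⟨i₀, hi₀⟩ := hcon
    have hu : (DirectSum.decompose 𝒜 (c i₀) 0 : R) ≠ 0 := by
      intro h
      exact hi₀ (by
        rw [hmdef]
        show c i₀ ∈ (HomogeneousIdeal.irrelevant 𝒜)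
        rw [HomogeneousIdeal.mem_irrelevant_iff, GradedRing.proj_apply]
        exact h)
    have hrel : ∑ i, (if 0 ≤ e i₀ - e i
        then ((DirectSum.decompose 𝒜 (c i) ((e i₀ - e i).toNat) : R)) else 0) • x i = 0 := by
      have h7 := aux_decompose_comb 𝒜 ℳ hsmul x e hx c (e i₀)
      rw [← hφ_apply, hc] at h7
      simpa using h7.symm
    have hr0 : 0 < r := i₀.pos
    let κ : Fin (r - 1 + 1) ≃ Fin r := finCongr (Nat.succ_pred_eq_of_pos hr0)
    let ι : Fin (r - 1) → Fin r := fun b => κ ((κ.symm i₀).succAbove b)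
    have hι_ne : ∀ b, ι b ≠ i₀ := fun b h => Fin.succAbove_ne (κ.symm i₀) b (by
      have h' := congrArg κ.symm h; simpa [ι] using h')
    have hι_cover : ∀ i : Fin r, i ≠ i₀ → ∃ b, ι b = i := by
      intro i hi
      have hne : κ.symm i ≠ κ.symm i₀ := fun h => hi (by
        have h' := congrArg κ h; simpa using h')
      obtain ⟨b, hb⟩ := Fin.exists_succAbove_eq hne
      exact ⟨b, by simp [ι, hb]⟩
    have hspan' : Submodule.span R (Set.range (x ∘ ι)) = ⊤ := by
      have hx0 : x i₀ ∈ Submodule.span R (Set.range (x ∘ ι)) := by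
        rw [← Finset.add_sum_erase _ _ (Finset.mem_univ i₀)] at hrel
        have hterm : (if 0 ≤ e i₀ - e i₀
            then ((DirectSum.decompose 𝒜 (c i₀) ((e i₀ - e i₀).toNat) : R)) else 0) • x i₀
            = (DirectSum.decompose 𝒜 (c i₀) 0 : R) • x i₀ := by
          rw [sub_self]; simp
        rw [hterm] at hrel
        have hsum : (DirectSum.decompose 𝒜 (c i₀) 0 : R) • x i₀
            = - ∑ i ∈ Finset.univ.erase i₀, (if 0 ≤ e i₀ - e i
              then ((DirectSum.decompose 𝒜 (c i) ((e i₀ - e i).toNat) : R)) else 0) • x i := by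
          rw [eq_neg_iff_add_eq_zero]; exact hrel
        have hmem : (DirectSum.decompose 𝒜 (c i₀) 0 : R) • x i₀
            ∈ Submodule.span R (Set.range (x ∘ ι)) := by
          rw [hsum]
          apply Submodule.neg_mem
          apply Submodule.sum_mem
          intro i hi
          obtain ⟨b, hb⟩ := hι_cover i (Finset.ne_of_mem_erase hi)
          exact Submodule.smul_mem _ _ (Submodule.subset_span ⟨b, by
            show x (ι b) = x i; rw [hb]⟩)
        obtain ⟨a, ha⟩ := Submodule.mem_one.mp
          (h0 (SetLike.coe_mem (DirectSum.decompose 𝒜 (c i₀) 0)))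
        have ha0 : a ≠ 0 := fun h => hu (by rw [← ha, h, map_zero])
        have h5 : a • x i₀ ∈ Submodule.span R (Set.range (x ∘ ι)) := by
          rw [← algebraMap_smul R a (x i₀), ha]; exact hmem
        have h6 : x i₀ = a⁻¹ • (a • x i₀) := by
          rw [smul_smul, inv_mul_cancel₀ ha0, one_smul]
        rw [h6, ← algebraMap_smul R a⁻¹]
        exact Submodule.smul_mem _ _ h5
      rw [eq_top_iff, ← hspan, Submodule.span_le]
      rintro _ ⟨i, rfl⟩
      by_cases hii : i = i₀
      · rw [hii]; exact hx0
      · obtain ⟨b, hb⟩ := hι_cover i hii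
        exact Submodule.subset_span ⟨b, by show x (ι b) = x i; rw [hb]⟩
    exact Nat.find_min hgen (Nat.sub_lt hr0 one_pos)
      ⟨e ∘ ι, x ∘ ι, fun b => hx (ι b), hspan'⟩
  -- injectivity
  have hker0 : ∀ c, φ c = 0 → c = 0 := by
    intro c hc
    funext i
    show c i = 0
    have hcomp : ∀ nn : ℕ, (DirectSum.decompose 𝒜 (c i) nn : R) = 0 := by
      intro nn
      set tt : ℤ := (nn : ℤ) + e i with httdef
      set c' : Fin r → R := fun i' =>
        if 0 ≤ tt - e i' then ((DirectSum.decompose 𝒜 (c i') ((tt - e i').toNat) : R)) else 0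
        with hc'def
      have hc'0 : φ c' = 0 := by
        have h7 := aux_decompose_comb 𝒜 ℳ hsmul x e hx c tt
        have hz : (∑ i, c i • x i) = 0 := by rw [← hφ_apply]; exact hc
        rw [hz] at h7
        simp only [DirectSum.decompose_zero, DirectSum.zero_apply, ZeroMemClass.coe_zero] at h7
        rw [hφ_apply]
        exact h7.symm
      obtain ⟨v, hv⟩ := aux_loc_kill m hm φ hφ_surj hker hfree c' hc'0
      have hvi := congrFun hv i
      have hc'i : c' i = (DirectSum.decompose 𝒜 (c i) nn : R) := by
        rw [hc'def]
        simp only []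
        rw [if_pos (by omega)]
        have h11 : (tt - e i).toNat = nn := by omega
        rw [h11]
      have h12 : (v : R) * (DirectSum.decompose 𝒜 (c i) nn : R) = 0 := by
        rw [← hc'i]
        simpa [smul_eq_mul] using hvi
      have hvm : (v : R) ∉ m := v.2
      exact aux_homog_kill 𝒜 h0 hvm (SetLike.coe_mem _) h12
    have hci : c i = ∑ nn ∈ (DirectSum.decompose 𝒜 (c i)).support,
        ((DirectSum.decompose 𝒜 (c i)) nn : R) := (DirectSum.sum_support_decompose 𝒜 (c i)).symm
    rw [hci]
    exact Finset.sum_eq_zero fun nn _ => hcomp nn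
  have hinj : Function.Injective φ := by
    rw [← LinearMap.ker_eq_bot]
    exact LinearMap.ker_eq_bot'.mpr hker0
  have hbij : Function.Bijective φ := ⟨hinj, hφ_surj⟩
  let eqv := LinearEquiv.ofBijective φ hbij
  refine ⟨r, fun i => -(e i), eqv.symm, ?_⟩
  intro j x0 hx0 i
  have hφe : φ (eqv.symm x0) = x0 := eqv.apply_symm_apply x0
  set c : Fin r → R := eqv.symm x0 with hcdef
  set c' : Fin r → R := fun i' =>
    if 0 ≤ j - e i' then ((DirectSum.decompose 𝒜 (c i') ((j - e i').toNat) : R)) else 0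
    with hc'def
  have h8 : φ c' = x0 := by
    have h7 := aux_decompose_comb 𝒜 ℳ hsmul x e hx c j
    have h7' : φ c' = (DirectSum.decompose ℳ (∑ i, c i • x i) j : M) := by
      rw [hφ_apply]; exact h7.symm
    rw [h7', ← hφ_apply, hφe]
    exact DirectSum.decompose_of_mem_same ℳ hx0
  have h9 : c' = c := hinj (by rw [h8, hφe])
  have h10 := congrFun h9 i
  by_cases hij : (0 : ℤ) ≤ j + -(e i)
  · rw [dif_pos hij]
    have h13' : c' i = (DirectSum.decompose 𝒜 (c i) ((j - e i).toNat) : R) := by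
      rw [hc'def]
      simp only []
      rw [if_pos (by omega)]
    have h13 : (DirectSum.decompose 𝒜 (c i) ((j - e i).toNat) : R) = c i := h13'.symm.trans h10
    have htn : (j + -(e i)).toNat = (j - e i).toNat := by omega
    rw [htn]
    show c i ∈ 𝒜 ((j - e i).toNat)
    rw [← h13]
    exact SetLike.coe_mem _
  · rw [dif_neg hij]
    show c i = 0
    rw [← h10, hc'def]
    simp only []
    rw [if_neg (by omega)]
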